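/- (Theorem 3.4, a priori estimate.) Under the Hilbert propagator setup and the Hilbert solution setup, assume u₀ ≠ 0, let κ > 0, define ζ(t) := ‖U(t)‖·‖u₀‖ + ‖U(t)‖·∫₀ᵗ ‖V(ξ)‖·β(ξ) dξ, and assume α(t)·((κ+1)·ζ(t))^p ≤ κ·β(t) for all t ≥ 0. Then ‖u(t)‖ < (κ+1)·ζ(t) for all t ∈ [0,T). -/

import Mathlib

open MeasureTheory Filter
open scoped ENNReal

set_option maxHeartbeats 1000000 in
theorem stmt14
    {H : Type*} [NormedAddCommGroup H] [InnerProductSpace ℂ H] [CompleteSpace H]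
    (B U V : ℝ → H →L[ℂ] H)
    (hB : Continuous B)
    (hU0 : U 0 = 1) (hV0 : V 0 = 1)
    (hVU : ∀ t, 0 ≤ t → (V t).comp (U t) = 1)
    (hUV : ∀ t, 0 ≤ t → (U t).comp (V t) = 1)
    (hUd : ∀ t, 0 ≤ t → HasDerivAt U ((B t).comp (U t)) t)
    (hVd : ∀ t, 0 ≤ t → HasDerivAt V (-((V t).comp (B t))) t)
    (p : ℝ) (hp : 1 < p)
    (α β : ℝ → ℝ) (hαc : Continuous α) (hβc : Continuous β)
    (hα0 : ∀ t, 0 ≤ α t) (hβ0 : ∀ t, 0 ≤ β t)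
    (T : ℝ≥0∞) (hT : 0 < T)
    (u w G f : ℝ → H) (u₀ : H) (hu0 : u 0 = u₀)
    (hwc : ContinuousOn w {t : ℝ | 0 ≤ t ∧ ENNReal.ofReal t < T})
    (hGc : ContinuousOn G {t : ℝ | 0 ≤ t ∧ ENNReal.ofReal t < T})
    (hfc : ContinuousOn f {t : ℝ | 0 ≤ t ∧ ENNReal.ofReal t < T})
    (hud : ∀ t, 0 ≤ t → ENNReal.ofReal t < T →
      HasDerivAt u (B t (u t) + w t + G t + f t) t)
    (hw : ∀ t, 0 ≤ t → ENNReal.ofReal t < T →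
      (inner ℂ (V t (w t)) (V t (u t)) : ℂ).re ≤ 0)
    (hGb : ∀ t, 0 ≤ t → ENNReal.ofReal t < T → ‖G t‖ ≤ α t * ‖u t‖ ^ p)
    (hfb : ∀ t, 0 ≤ t → ENNReal.ofReal t < T → ‖f t‖ ≤ β t)
    (hVud : ∀ t, 0 ≤ t → ENNReal.ofReal t < T →
      DifferentiableAt ℝ (fun s => ‖V s (u s)‖) t)
    (hu₀ : u₀ ≠ 0) (κ : ℝ) (hκ : 0 < κ)
    (ζ : ℝ → ℝ)
    (hζ : ∀ t, ζ t = ‖U t‖ * ‖u₀‖ + ‖U t‖ * ∫ ξ in (0:ℝ)..t, ‖V ξ‖ * β ξ)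
    (hκβ : ∀ t, 0 ≤ t → α t * ((κ + 1) * ζ t) ^ p ≤ κ * β t) :
    ∀ t, 0 ≤ t → ENNReal.ofReal t < T → ‖u t‖ < (κ + 1) * ζ t := by
  intro t₀ ht₀ ht₀T
  have hH : Nontrivial H := nontrivial_of_ne u₀ 0 hu₀
  have hun0 : 0 < ‖u₀‖ := norm_pos_iff.mpr hu₀
  have hVca : ∀ s : ℝ, 0 ≤ s → ContinuousAt V s := fun s hs => (hVd s hs).continuousAt
  have hUca : ∀ s : ℝ, 0 ≤ s → ContinuousAt U s := fun s hs => (hUd s hs).continuousAt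
  set Vt : ℝ → H →L[ℂ] H := fun s => V (max s 0) with hVt
  have hVtc : Continuous Vt := by
    rw [continuous_iff_continuousAt]
    intro s
    have h1 : ContinuousAt (fun s : ℝ => max s 0) s :=
      (continuous_id.max continuous_const).continuousAt
    exact ContinuousAt.comp (hVca (max s 0) (le_max_right s 0)) h1
  have hmaxeq : ∀ s : ℝ, 0 ≤ s → Vt s = V s := fun s hs => by
    simp only [hVt, max_eq_left hs]
  set I : ℝ → ℝ := fun t => ∫ ξ in (0:ℝ)..t, ‖Vt ξ‖ * β ξ with hIdef
  have hIc : Continuous (fun s : ℝ => ‖Vt s‖ * β s) := hVtc.norm.mul hβc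
  have hId : ∀ x : ℝ, HasDerivAt I (‖Vt x‖ * β x) x := fun x =>
    (hIc.integral_hasStrictDerivAt 0 x).hasDerivAt
  set Z : ℝ → ℝ := fun t => ‖U t‖ * ‖u₀‖ + ‖U t‖ * I t with hZdef
  have hζeq : ∀ t : ℝ, 0 ≤ t → ζ t = Z t := by
    intro t ht
    rw [hζ, hZdef]
    have : (∫ ξ in (0:ℝ)..t, ‖V ξ‖ * β ξ) = I t := by
      rw [hIdef]
      apply intervalIntegral.integral_congr
      intro ξ hξ
      rw [Set.uIcc_of_le ht] at hξ
      show ‖V ξ‖ * β ξ = ‖Vt ξ‖ * β ξ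
      rw [hmaxeq ξ hξ.1]
    rw [this]
  have hdom : ∀ s : ℝ, s ∈ Set.Icc (0:ℝ) t₀ → ENNReal.ofReal s < T := fun s hs =>
    lt_of_le_of_lt (ENNReal.ofReal_le_ofReal hs.2) ht₀T
  have hZc : ContinuousOn Z (Set.Icc 0 t₀) := by
    intro s hs
    have h1 : ContinuousAt (fun t => ‖U t‖) s := (hUca s hs.1).norm
    have h2 : ContinuousAt I s := (hId s).continuousAt
    exact ((h1.mul continuousAt_const).add (h1.mul h2)).continuousWithinAt
  have huc : ContinuousOn u (Set.Icc 0 t₀) := fun s hs =>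
    ((hud s hs.1 (hdom s hs)).continuousAt).continuousWithinAt
  by_contra hcon
  push_neg at hcon
  rw [hζeq t₀ ht₀] at hcon
  set E : Set ℝ := Set.Icc 0 t₀ ∩ (fun t => (κ+1) * Z t - ‖u t‖) ⁻¹' Set.Iic 0 with hE
  have hEclosed : IsClosed E := ContinuousOn.preimage_isClosed_of_isClosed
    ((continuousOn_const.mul hZc).sub huc.norm) isClosed_Icc isClosed_Iic
  have ht₀E : t₀ ∈ E := by
    refine ⟨⟨ht₀, le_refl t₀⟩, ?_⟩
    simp only [Set.mem_preimage, Set.mem_Iic, sub_nonpos]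
    exact hcon
  have hEbdd : BddBelow E := ⟨0, fun x hx => hx.1.1⟩
  set t₁ := sInf E with ht₁def
  have ht₁E : t₁ ∈ E := hEclosed.csInf_mem ⟨t₀, ht₀E⟩ hEbdd
  have ht₁0 : 0 ≤ t₁ := ht₁E.1.1
  have ht₁t₀ : t₁ ≤ t₀ := ht₁E.1.2
  have hmem : (κ+1) * Z t₁ ≤ ‖u t₁‖ := by
    have := ht₁E.2
    simp only [Set.mem_preimage, Set.mem_Iic, sub_nonpos] at this
    exact this
  have hZ0 : Z 0 = ‖u₀‖ := by
    simp [hZdef, hIdef, hU0, ContinuousLinearMap.one_def, ContinuousLinearMap.norm_id]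
  have ht₁pos : 0 < t₁ := by
    rcases lt_or_eq_of_le ht₁0 with h | h
    · exact h
    · exfalso
      rw [← h] at hmem
      rw [hZ0, hu0] at hmem
      nlinarith
  have hlt : ∀ s : ℝ, 0 ≤ s → s < t₁ → ‖u s‖ < (κ+1) * Z s := by
    intro s hs hst
    by_contra hcon2
    push_neg at hcon2
    have hsE : s ∈ E := by
      refine ⟨⟨hs, hst.le.trans ht₁t₀⟩, ?_⟩
      simp only [Set.mem_preimage, Set.mem_Iic, sub_nonpos]
      exact hcon2
    exact absurd (csInf_le hEbdd hsE) (not_le.mpr hst)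
  -- Gronwall part
  set m : ℝ → ℝ := fun s => (κ+1) * (‖Vt s‖ * β s) with hmdef
  have hmc : Continuous m := continuous_const.mul hIc
  set F : ℝ → ℝ := fun t => ∫ s in (0:ℝ)..t, m s with hFdef
  have hFd : ∀ x : ℝ, HasDerivAt F (m x) x := fun x =>
    (hmc.integral_hasStrictDerivAt 0 x).hasDerivAt
  have hsub : ∀ s : ℝ, s ∈ Set.Icc (0:ℝ) t₁ → s ∈ Set.Icc (0:ℝ) t₀ := fun s hs =>
    ⟨hs.1, hs.2.trans ht₁t₀⟩
  have key : ∀ x ∈ Set.Ioo (0:ℝ) t₁, deriv (fun s => ‖V s (u s)‖) x ≤ m x := by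
    intro x hx
    have hx0 : (0:ℝ) ≤ x := hx.1.le
    have hxT : ENNReal.ofReal x < T := hdom x (hsub x ⟨hx0, hx.2.le⟩)
    have hm0 : 0 ≤ m x := by
      have := mul_nonneg (norm_nonneg (Vt x)) (hβ0 x)
      simp only [hmdef]
      positivity
    rcases eq_or_lt_of_le (norm_nonneg (V x (u x))) with h0 | hpos
    · -- norm is zero at x: local minimum
      have hmin : IsLocalMin (fun s => ‖V s (u s)‖) x :=
        Filter.Eventually.of_forall fun y => by
          simpa only [← h0] using norm_nonneg (V y (u y))
      rw [hmin.deriv_eq_zero]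
      exact hm0
    · -- positive case
      have hud' := hud x hx0 hxT
      set gd : H := V x (w x) + V x (G x) + V x (f x) with hgddef
      have hgd : HasDerivAt (fun s => V s (u s)) gd x := by
        have hVd' : HasDerivAt (fun s => (V s).restrictScalars ℝ)
            ((-((V x).comp (B x))).restrictScalars ℝ) x :=
          (ContinuousLinearMap.restrictScalarsL ℂ H H ℝ ℝ).hasFDerivAt.comp_hasDerivAt x
            (hVd x hx0)
        have h1 := hVd'.clm_apply hud'
        have h2 : HasDerivAt (fun s => V s (u s))
            ((-((V x).comp (B x))) (u x) + V x (B x (u x) + w x + G x + f x)) x := h1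
        convert h2 using 1
        simp only [hgddef, ContinuousLinearMap.neg_apply, ContinuousLinearMap.comp_apply,
          map_add]
        abel
      have hφd : HasDerivAt (fun s => ‖V s (u s)‖) (deriv (fun s => ‖V s (u s)‖) x) x :=
        (hVud x hx0 hxT).hasDerivAt
      have hsq : HasDerivAt (fun s => ‖V s (u s)‖ ^ 2)
          (2 * ‖V x (u x)‖ * deriv (fun s => ‖V s (u s)‖) x) x := by
        have this : HasDerivAt (fun s => ‖V s (u s)‖ ^ 2) _ x := hφd.pow 2
        convert this using 1
        push_cast
        norm_num
      have hre : HasDerivAt (fun s => ‖V s (u s)‖ ^ 2)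
          (RCLike.re ((inner ℂ (V x (u x)) gd + inner ℂ gd (V x (u x))) : ℂ)) x := by
        have hin : HasDerivAt (fun s => (inner ℂ (V s (u s)) (V s (u s)) : ℂ))
            ((inner ℂ (V x (u x)) gd + inner ℂ gd (V x (u x))) : ℂ) x :=
          HasDerivAt.inner ℂ hgd hgd
        have h2 := (RCLike.reCLM (K := ℂ)).hasFDerivAt.comp_hasDerivAt x hin
        simp only [Function.comp_def, RCLike.reCLM_apply] at h2
        have heq : (fun s => RCLike.re ((inner ℂ (V s (u s)) (V s (u s))) : ℂ))
            = fun s => ‖V s (u s)‖ ^ 2 := by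
          funext s
          exact inner_self_eq_norm_sq _
        rw [heq] at h2
        exact h2
      have huniq := hsq.unique hre
      -- decompose the re term
      have hsym : RCLike.re ((inner ℂ (V x (u x)) gd + inner ℂ gd (V x (u x))) : ℂ)
          = 2 * RCLike.re ((inner ℂ gd (V x (u x))) : ℂ) := by
        rw [← inner_conj_symm gd (V x (u x))]
        simp only [RCLike.re_to_complex, Complex.add_re, Complex.conj_re]
        ring
      have hadd : RCLike.re ((inner ℂ gd (V x (u x))) : ℂ)
          = RCLike.re ((inner ℂ (V x (w x)) (V x (u x))) : ℂ)
          + RCLike.re ((inner ℂ (V x (G x)) (V x (u x))) : ℂ)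
          + RCLike.re ((inner ℂ (V x (f x)) (V x (u x))) : ℂ) := by
        simp [hgddef, inner_add_left]
      -- bounds
      have hw' : RCLike.re ((inner ℂ (V x (w x)) (V x (u x))) : ℂ) ≤ 0 := by
        have := hw x hx0 hxT
        simpa [RCLike.re_to_complex] using this
      have hG' : RCLike.re ((inner ℂ (V x (G x)) (V x (u x))) : ℂ)
          ≤ ‖V x‖ * ‖G x‖ * ‖V x (u x)‖ := by
        calc RCLike.re ((inner ℂ (V x (G x)) (V x (u x))) : ℂ)
            ≤ ‖V x (G x)‖ * ‖V x (u x)‖ := re_inner_le_norm _ _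
          _ ≤ ‖V x‖ * ‖G x‖ * ‖V x (u x)‖ :=
              mul_le_mul_of_nonneg_right ((V x).le_opNorm _) (norm_nonneg _)
      have hf' : RCLike.re ((inner ℂ (V x (f x)) (V x (u x))) : ℂ)
          ≤ ‖V x‖ * ‖f x‖ * ‖V x (u x)‖ := by
        calc RCLike.re ((inner ℂ (V x (f x)) (V x (u x))) : ℂ)
            ≤ ‖V x (f x)‖ * ‖V x (u x)‖ := re_inner_le_norm _ _
          _ ≤ ‖V x‖ * ‖f x‖ * ‖V x (u x)‖ :=
              mul_le_mul_of_nonneg_right ((V x).le_opNorm _) (norm_nonneg _)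
      -- bootstrap bound on G
      have hux : ‖u x‖ < (κ+1) * Z x := hlt x hx0 hx.2
      have hGx : ‖G x‖ ≤ κ * β x := by
        calc ‖G x‖ ≤ α x * ‖u x‖ ^ p := hGb x hx0 hxT
          _ ≤ α x * ((κ+1) * ζ x) ^ p := by
              apply mul_le_mul_of_nonneg_left _ (hα0 x)
              rw [hζeq x hx0]
              exact Real.rpow_le_rpow (norm_nonneg _) hux.le (by linarith)
          _ ≤ κ * β x := hκβ x hx0
      have hfx : ‖f x‖ ≤ β x := hfb x hx0 hxT
      have hVn : (0:ℝ) ≤ ‖V x‖ := norm_nonneg _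
      have hmx : m x = (κ+1) * (‖V x‖ * β x) := by
        rw [hmdef]
        simp only []
        rw [hmaxeq x hx0]
      have hkey2 : ‖V x (u x)‖ * deriv (fun s => ‖V s (u s)‖) x
          ≤ ‖V x (u x)‖ * m x := by
        have hstep : RCLike.re ((inner ℂ gd (V x (u x))) : ℂ)
            ≤ (‖V x‖ * (κ * β x + β x)) * ‖V x (u x)‖ := by
          rw [hadd]
          have hGbd : ‖V x‖ * ‖G x‖ * ‖V x (u x)‖
              ≤ ‖V x‖ * (κ * β x) * ‖V x (u x)‖ := by
            apply mul_le_mul_of_nonneg_right _ (norm_nonneg _)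
            exact mul_le_mul_of_nonneg_left hGx hVn
          have hfbd : ‖V x‖ * ‖f x‖ * ‖V x (u x)‖
              ≤ ‖V x‖ * β x * ‖V x (u x)‖ := by
            apply mul_le_mul_of_nonneg_right _ (norm_nonneg _)
            exact mul_le_mul_of_nonneg_left hfx hVn
          nlinarith [hw', hG', hf']
        have h2eq : 2 * ‖V x (u x)‖ * deriv (fun s => ‖V s (u s)‖) x
            = 2 * RCLike.re ((inner ℂ gd (V x (u x))) : ℂ) := by
          rw [huniq, hsym]
        rw [hmx]
        have hdiv : ‖V x (u x)‖ * deriv (fun s => ‖V s (u s)‖) x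
            = RCLike.re ((inner ℂ gd (V x (u x))) : ℂ) := by linarith [h2eq]
        have hring : (‖V x‖ * (κ * β x + β x)) * ‖V x (u x)‖
            = ‖V x (u x)‖ * ((κ + 1) * (‖V x‖ * β x)) := by ring
        rw [hdiv, ← hring]
        exact hstep
      exact le_of_mul_le_mul_left hkey2 hpos
  -- antitonicity of φ - F on [0, t₁]
  have hanti : AntitoneOn (fun t => ‖V t (u t)‖ - F t) (Set.Icc 0 t₁) := by
    apply antitoneOn_of_deriv_nonpos (convex_Icc 0 t₁)
    · intro s hs
      exact (((hVud s hs.1 (hdom s (hsub s hs))).continuousAt).sub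
        (hFd s).continuousAt).continuousWithinAt
    · intro s hs
      rw [interior_Icc] at hs
      have h1 := hVud s hs.1.le (hdom s (hsub s ⟨hs.1.le, hs.2.le⟩))
      exact (h1.sub (hFd s).differentiableAt).differentiableWithinAt
    · intro s hs
      rw [interior_Icc] at hs
      have h1 := hVud s hs.1.le (hdom s (hsub s ⟨hs.1.le, hs.2.le⟩))
      have hd : deriv (fun t => ‖V t (u t)‖ - F t) s
          = deriv (fun t => ‖V t (u t)‖) s - m s := by
        rw [deriv_fun_sub h1 (hFd s).differentiableAt, (hFd s).deriv]
      rw [hd]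
      linarith [key s hs]
  have h01 : ‖V t₁ (u t₁)‖ - F t₁ ≤ ‖V 0 (u 0)‖ - F 0 :=
    hanti (Set.left_mem_Icc.mpr ht₁0) (Set.right_mem_Icc.mpr ht₁0) ht₁0
  have hF0 : F 0 = 0 := by
    rw [hFdef]
    exact intervalIntegral.integral_same
  have hφ0 : ‖V 0 (u 0)‖ = ‖u₀‖ := by
    rw [hV0, hu0]
    simp
  have hFt₁ : F t₁ = (κ+1) * I t₁ := by
    rw [hFdef, hIdef]
    exact intervalIntegral.integral_const_mul _ _
  have hφt₁ : ‖V t₁ (u t₁)‖ ≤ ‖u₀‖ + (κ+1) * I t₁ := by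
    rw [hF0, hφ0, hFt₁] at h01
    linarith
  have hu_le : ‖u t₁‖ ≤ ‖U t₁‖ * ‖V t₁ (u t₁)‖ := by
    have heq : u t₁ = U t₁ (V t₁ (u t₁)) := by
      have := hUV t₁ ht₁0
      calc u t₁ = ((U t₁).comp (V t₁)) (u t₁) := by rw [this]; simp
        _ = U t₁ (V t₁ (u t₁)) := rfl
    calc ‖u t₁‖ = ‖U t₁ (V t₁ (u t₁))‖ := by rw [← heq]
      _ ≤ ‖U t₁‖ * ‖V t₁ (u t₁)‖ := (U t₁).le_opNorm _
  have hUpos : 0 < ‖U t₁‖ := by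
    rw [norm_pos_iff]
    intro hzero
    have h1 := hVU t₁ ht₁0
    rw [hzero] at h1
    have : (0 : H →L[ℂ] H) u₀ = (1 : H →L[ℂ] H) u₀ := by
      rw [← h1]
      simp
    simp at this
    exact hu₀ this.symm
  have hfin : ‖u t₁‖ ≤ ‖U t₁‖ * ‖u₀‖ + (κ+1) * (‖U t₁‖ * I t₁) := by
    calc ‖u t₁‖ ≤ ‖U t₁‖ * ‖V t₁ (u t₁)‖ := hu_le
      _ ≤ ‖U t₁‖ * (‖u₀‖ + (κ+1) * I t₁) :=
          mul_le_mul_of_nonneg_left hφt₁ (norm_nonneg _)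
      _ = ‖U t₁‖ * ‖u₀‖ + (κ+1) * (‖U t₁‖ * I t₁) := by ring
  have hZt₁ : Z t₁ = ‖U t₁‖ * ‖u₀‖ + ‖U t₁‖ * I t₁ := rfl
  rw [hZt₁] at hmem
  nlinarith [mul_pos hκ (mul_pos hUpos hun0)]
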